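/- Let Q ⊆ ℝ, let m : Q → ℝ^{p×p} be such that m(ξ) is symmetric positive semidefinite for each ξ ∈ Q, and let C_ξ : ℝ^{d+1} → ℝ be a positive definite function (covariance function) for each ξ ∈ Q. Suppose for each fixed lag k ∈ ℝ^{d+1} and all i,j the product m_ij(ξ)·C_ξ(k) is integrable with respect to a positive measure F on Q. Then the matrix-valued function C(k) = [∫_Q m_ij(ξ) C_ξ(k) F(dξ)]_{i,j=1}^p is a valid p-variate matrix covariance function, i.e., for any points x_1,…,x_n ∈ ℝ^{d+1} and any λ ∈ ℝ^{np}, the quadratic form λ^T Σ λ ≥ 0, where Σ is the np×np block matrix with blocks C(x_α − x_β). -/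

import Mathlib

open MeasureTheory

/-- Set integral nonnegativity without measurability of the set, from integrability. -/
lemma aux_setIntegral_nonneg {f : ℝ → ℝ} {Q : Set ℝ} {F : Measure ℝ}
    (hf : IntegrableOn f Q F) (h : ∀ ξ ∈ Q, 0 ≤ f ξ) : 0 ≤ ∫ ξ in Q, f ξ ∂F := by
  obtain ⟨g, hg, hfg⟩ := hf.1
  have hne : (F.restrict Q) {x | ¬ f x = g x} = 0 := hfg
  have hnull : (F.restrict Q) {x | g x < 0} = 0 := by
    have hmeas : MeasurableSet {x | g x < 0} :=
      measurableSet_lt hg.measurable measurable_const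
    rw [Measure.restrict_apply hmeas]
    refine le_antisymm ?_ zero_le
    calc F ({x | g x < 0} ∩ Q) ≤ F ({x | ¬ f x = g x} ∩ Q) := by
          refine measure_mono fun x ⟨hx, hxQ⟩ => ⟨fun he => ?_, hxQ⟩
          exact absurd (he ▸ h x hxQ) (not_le.mpr hx)
      _ ≤ (F.restrict Q) {x | ¬ f x = g x} := Measure.le_restrict_apply _ _
      _ = 0 := hne
  have hg0 : 0 ≤ᵐ[F.restrict Q] g := by
    rw [Filter.EventuallyLE, ae_iff]
    simpa [not_le] using hnull
  have hf0 : 0 ≤ᵐ[F.restrict Q] f := by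
    filter_upwards [hfg, hg0] with x h1 h2
    rw [h1]; exact h2
  exact setIntegral_nonneg_of_ae_restrict hf0

/-- A univariate positive definite (covariance) function on `ℝ^{d+1}`. -/
def IsPosDefFn {d : ℕ} (C : EuclideanSpace ℝ (Fin (d + 1)) → ℝ) : Prop :=
  ∀ (n : ℕ) (x : Fin n → EuclideanSpace ℝ (Fin (d + 1))) (a : Fin n → ℝ),
    0 ≤ ∑ α, ∑ β, a α * a β * C (x α - x β)

/-- Pointwise nonnegativity of the block quadratic form. -/
lemma aux_pointwise {d p n : ℕ} (M : Matrix (Fin p) (Fin p) ℝ) (hM : M.PosSemidef)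
    (c : EuclideanSpace ℝ (Fin (d + 1)) → ℝ) (hc : IsPosDefFn c)
    (x : Fin n → EuclideanSpace ℝ (Fin (d + 1))) (lam : Fin n → Fin p → ℝ) :
    0 ≤ ∑ α, ∑ β, ∑ i, ∑ j, lam α i * lam β j * (M i j * c (x α - x β)) := by
  obtain ⟨B, hB⟩ : ∃ B : Matrix (Fin p) (Fin p) ℝ, M = star B * B := by
    open scoped MatrixOrder in
    exact CStarAlgebra.nonneg_iff_eq_star_mul_self.mp hM.nonneg
  have hMij : ∀ i j, M i j = ∑ r, B r i * B r j := by
    intro i j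
    rw [hB]
    simp [Matrix.mul_apply, Matrix.conjTranspose_apply]
  have key : (∑ α, ∑ β, ∑ i, ∑ j, lam α i * lam β j * (M i j * c (x α - x β)))
      = ∑ r, ∑ α, ∑ β,
        (∑ i, lam α i * B r i) * (∑ i, lam β i * B r i) * c (x α - x β) := by
    have step1 : ∀ α β, (∑ i, ∑ j, lam α i * lam β j * (M i j * c (x α - x β)))
        = ∑ r, (∑ i, lam α i * B r i) * (∑ i, lam β i * B r i) * c (x α - x β) := by
      intro α β
      have mid : (∑ i, ∑ j, lam α i * lam β j * (M i j * c (x α - x β)))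
          = ∑ r, ∑ i, ∑ j,
            (lam α i * B r i) * ((lam β j * B r j) * c (x α - x β)) := by
        calc (∑ i, ∑ j, lam α i * lam β j * (M i j * c (x α - x β)))
            = ∑ i, ∑ j, ∑ r,
              (lam α i * B r i) * ((lam β j * B r j) * c (x α - x β)) := by
              refine Finset.sum_congr rfl fun i _ => Finset.sum_congr rfl fun j _ => ?_
              rw [hMij]
              simp only [Finset.sum_mul, Finset.mul_sum]
              exact Finset.sum_congr rfl fun r _ => by ring
          _ = ∑ i, ∑ r, ∑ j,
              (lam α i * B r i) * ((lam β j * B r j) * c (x α - x β)) :=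
              Finset.sum_congr rfl fun i _ => Finset.sum_comm
          _ = ∑ r, ∑ i, ∑ j,
              (lam α i * B r i) * ((lam β j * B r j) * c (x α - x β)) :=
              Finset.sum_comm
      rw [mid]
      refine Finset.sum_congr rfl fun r _ => ?_
      simp only [Finset.sum_mul, Finset.mul_sum]
      rw [Finset.sum_comm]
      refine Finset.sum_congr rfl fun i _ => Finset.sum_congr rfl fun j _ => by ring
    calc (∑ α, ∑ β, ∑ i, ∑ j, lam α i * lam β j * (M i j * c (x α - x β)))
        = ∑ α, ∑ β, ∑ r,
          (∑ i, lam α i * B r i) * (∑ i, lam β i * B r i) * c (x α - x β) :=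
          Finset.sum_congr rfl fun α _ => Finset.sum_congr rfl fun β _ => step1 α β
      _ = ∑ α, ∑ r, ∑ β,
          (∑ i, lam α i * B r i) * (∑ i, lam β i * B r i) * c (x α - x β) :=
          Finset.sum_congr rfl fun α _ => Finset.sum_comm
      _ = ∑ r, ∑ α, ∑ β,
          (∑ i, lam α i * B r i) * (∑ i, lam β i * B r i) * c (x α - x β) :=
          Finset.sum_comm
  rw [key]
  exact Finset.sum_nonneg fun r _ => hc n x (fun γ => ∑ i, lam γ i * B r i)

/-- Scale mixtures of a univariate covariance function against a family of positive
semidefinite matrices yield a valid matrix-valued covariance function. -/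
theorem mixture_matrix_covariance (d p : ℕ) (Q : Set ℝ) (F : Measure ℝ)
    (m : ℝ → Matrix (Fin p) (Fin p) ℝ)
    (C : ℝ → EuclideanSpace ℝ (Fin (d + 1)) → ℝ)
    (hm : ∀ ξ ∈ Q, (m ξ).PosSemidef)
    (hC : ∀ ξ ∈ Q, IsPosDefFn (C ξ))
    (hInt : ∀ (k : EuclideanSpace ℝ (Fin (d + 1))) (i j : Fin p),
      IntegrableOn (fun ξ => m ξ i j * C ξ k) Q F) :
    ∀ (n : ℕ) (x : Fin n → EuclideanSpace ℝ (Fin (d + 1)))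
      (lam : Fin n → Fin p → ℝ),
      0 ≤ ∑ α, ∑ β, ∑ i, ∑ j,
        lam α i * lam β j * ∫ ξ in Q, m ξ i j * C ξ (x α - x β) ∂F := by
  intro n x lam
  have hInt1 : ∀ (α β : Fin n) (i j : Fin p),
      IntegrableOn (fun ξ => lam α i * lam β j * (m ξ i j * C ξ (x α - x β))) Q F :=
    fun α β i j => (hInt (x α - x β) i j).const_mul _
  have hInt2 : ∀ (α β : Fin n) (i : Fin p),
      IntegrableOn (fun ξ => ∑ j, lam α i * lam β j * (m ξ i j * C ξ (x α - x β))) Q F :=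
    fun α β i => integrable_finset_sum _ fun j _ => hInt1 α β i j
  have hInt3 : ∀ (α β : Fin n),
      IntegrableOn (fun ξ => ∑ i, ∑ j, lam α i * lam β j * (m ξ i j * C ξ (x α - x β))) Q F :=
    fun α β => integrable_finset_sum _ fun i _ => hInt2 α β i
  have hInt4 : ∀ (α : Fin n),
      IntegrableOn
        (fun ξ => ∑ β, ∑ i, ∑ j, lam α i * lam β j * (m ξ i j * C ξ (x α - x β))) Q F :=
    fun α => integrable_finset_sum _ fun β _ => hInt3 α β
  have hInt5 :
      IntegrableOn
        (fun ξ => ∑ α, ∑ β, ∑ i, ∑ j, lam α i * lam β j * (m ξ i j * C ξ (x α - x β))) Q F :=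
    integrable_finset_sum _ fun α _ => hInt4 α
  have e0 : ∀ (α β : Fin n) (i j : Fin p),
      lam α i * lam β j * ∫ ξ in Q, m ξ i j * C ξ (x α - x β) ∂F
        = ∫ ξ in Q, lam α i * lam β j * (m ξ i j * C ξ (x α - x β)) ∂F :=
    fun α β i j => (integral_const_mul _ _).symm
  have e1 : ∀ (α β : Fin n) (i : Fin p),
      (∑ j, ∫ ξ in Q, lam α i * lam β j * (m ξ i j * C ξ (x α - x β)) ∂F)
        = ∫ ξ in Q, ∑ j, lam α i * lam β j * (m ξ i j * C ξ (x α - x β)) ∂F :=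
    fun α β i => (integral_finset_sum _ fun j _ => hInt1 α β i j).symm
  have e2 : ∀ (α β : Fin n),
      (∑ i, ∫ ξ in Q, ∑ j, lam α i * lam β j * (m ξ i j * C ξ (x α - x β)) ∂F)
        = ∫ ξ in Q, ∑ i, ∑ j, lam α i * lam β j * (m ξ i j * C ξ (x α - x β)) ∂F :=
    fun α β => (integral_finset_sum _ fun i _ => hInt2 α β i).symm
  have e3 : ∀ (α : Fin n),
      (∑ β, ∫ ξ in Q, ∑ i, ∑ j, lam α i * lam β j * (m ξ i j * C ξ (x α - x β)) ∂F)
        = ∫ ξ in Q, ∑ β, ∑ i, ∑ j, lam α i * lam β j * (m ξ i j * C ξ (x α - x β)) ∂F :=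
    fun α => (integral_finset_sum _ fun β _ => hInt3 α β).symm
  have e4 :
      (∑ α, ∫ ξ in Q, ∑ β, ∑ i, ∑ j, lam α i * lam β j * (m ξ i j * C ξ (x α - x β)) ∂F)
        = ∫ ξ in Q, ∑ α, ∑ β, ∑ i, ∑ j, lam α i * lam β j * (m ξ i j * C ξ (x α - x β)) ∂F :=
    (integral_finset_sum _ fun α _ => hInt4 α).symm
  calc (0:ℝ)
      ≤ ∫ ξ in Q, ∑ α, ∑ β, ∑ i, ∑ j, lam α i * lam β j * (m ξ i j * C ξ (x α - x β)) ∂F := by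
        refine aux_setIntegral_nonneg hInt5 fun ξ hξ => ?_
        exact aux_pointwise (m ξ) (hm ξ hξ) (C ξ) (hC ξ hξ) x lam
    _ = ∑ α, ∑ β, ∑ i, ∑ j,
        lam α i * lam β j * ∫ ξ in Q, m ξ i j * C ξ (x α - x β) ∂F := by
        simp only [e0, e1, e2, e3, e4]
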